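/- Conjecture: for every norm ‖·‖ on ℝ^m there exists a constant C₂ > 0 depending only on the norm such that whenever Q ∈ ℝ^{m×m} is produced by the arbitrary-norm QR algorithm (columns are unit-norm normalized residuals of best approximations, each at distance 1 from the span of the previous columns), then min_{‖x‖=1} ‖Qx‖ ≥ C₂. -/

import Mathlib

def IsNorm {m : ℕ} (ν : (Fin m → ℝ) → ℝ) : Prop :=
  (∀ x, 0 ≤ ν x) ∧ (∀ x, ν x = 0 → x = 0) ∧
  (∀ (a : ℝ) (x : Fin m → ℝ), ν (a • x) = |a| * ν x) ∧
  (∀ x y : Fin m → ℝ, ν (x + y) ≤ ν x + ν y)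

section aux
variable {m : ℕ} {ν : (Fin m → ℝ) → ℝ} (hν : IsNorm ν)

lemma nu_zero (hν : IsNorm ν) : ν 0 = 0 := by
  have := hν.2.2.1 0 0
  simpa using this

lemma nu_pos (hν : IsNorm ν) {x : Fin m → ℝ} (hx : x ≠ 0) : 0 < ν x :=
  lt_of_le_of_ne (hν.1 x) fun h => hx (hν.2.1 x h.symm)

lemma nu_sub_comm (hν : IsNorm ν) (x y : Fin m → ℝ) : ν (x - y) = ν (y - x) := by
  have := hν.2.2.1 (-1) (y - x)
  simpa [neg_sub] using this

lemma nu_sum_le (hν : IsNorm ν) {ι : Type*} (s : Finset ι) (f : ι → Fin m → ℝ) :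
    ν (∑ i ∈ s, f i) ≤ ∑ i ∈ s, ν (f i) := by
  classical
  induction s using Finset.induction with
  | empty => simp [nu_zero hν]
  | insert _ _ h ih =>
    rw [Finset.sum_insert h, Finset.sum_insert h]
    exact (hν.2.2.2 _ _).trans (by linarith)

lemma nu_abs_sub (hν : IsNorm ν) (x y : Fin m → ℝ) : |ν x - ν y| ≤ ν (x - y) := by
  rw [abs_sub_le_iff]
  constructor
  · have := hν.2.2.2 (x - y) y
    simpa using this
  · have := hν.2.2.2 (y - x) x
    rw [nu_sub_comm hν]
    simpa using this

lemma nu_upper (hν : IsNorm ν) : ∃ C : ℝ, 0 < C ∧ ∀ x, ν x ≤ C * ‖x‖ := by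
  classical
  set g : Fin m → Fin m → ℝ := fun i => Pi.single i 1 with hg
  refine ⟨(∑ i : Fin m, ν (g i)) + 1, by
    have : 0 ≤ ∑ i : Fin m, ν (g i) := Finset.sum_nonneg fun i _ => hν.1 _
    linarith, fun x => ?_⟩
  have hx : x = ∑ i : Fin m, x i • g i := by
    ext j; simp [hg, Pi.single_apply, Finset.sum_ite_eq', mul_comm]
  calc ν x = ν (∑ i : Fin m, x i • g i) := by rw [← hx]
    _ ≤ ∑ i : Fin m, ν (x i • g i) := nu_sum_le hν _ _
    _ = ∑ i : Fin m, |x i| * ν (g i) := by simp [hν.2.2.1]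
    _ ≤ ∑ i : Fin m, ‖x‖ * ν (g i) := by
        refine Finset.sum_le_sum fun i _ => ?_
        exact mul_le_mul_of_nonneg_right (by simpa using norm_le_pi_norm x i) (hν.1 _)
    _ = (∑ i : Fin m, ν (g i)) * ‖x‖ := by rw [← Finset.mul_sum, mul_comm]
    _ ≤ _ := by have := norm_nonneg x; nlinarith

lemma nu_continuous (hν : IsNorm ν) : Continuous ν := by
  obtain ⟨C, hC, hb⟩ := nu_upper hν
  refine (LipschitzWith.of_dist_le_mul (K := ⟨C, hC.le⟩) fun x y => ?_).continuous
  have h1 := nu_abs_sub hν x y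
  have h2 := hb (x - y)
  simp only [Real.dist_eq, dist_eq_norm]
  exact h1.trans h2

lemma nu_lower (hν : IsNorm ν) : ∃ c : ℝ, 0 < c ∧ ∀ x, c * ‖x‖ ≤ ν x := by
  rcases Nat.eq_zero_or_pos m with hm | hm
  · refine ⟨1, one_pos, fun x => ?_⟩
    have : x = 0 := by ext i; exact absurd i.2 (by omega)
    simp [this, nu_zero hν]
  · have hne : (Metric.sphere (0 : Fin m → ℝ) 1).Nonempty := by
      refine ⟨fun _ => 1, ?_⟩
      simp only [Metric.mem_sphere, dist_zero_right]
      have : Nonempty (Fin m) := ⟨⟨0, hm⟩⟩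
      simpa using pi_norm_const (ι := Fin m) (1:ℝ)
    obtain ⟨x₀, hx₀, hmin⟩ := (isCompact_sphere (0 : Fin m → ℝ) 1).exists_isMinOn hne
      (nu_continuous hν).continuousOn
    have hx₀n : ‖x₀‖ = 1 := by simpa using hx₀
    have hx₀0 : x₀ ≠ 0 := by intro h; simp [h] at hx₀n
    refine ⟨ν x₀, nu_pos hν hx₀0, fun x => ?_⟩
    rcases eq_or_ne x 0 with rfl | hx
    · simp [nu_zero hν, le_of_lt, nu_pos]
    · have hxn : ‖x‖ ≠ 0 := norm_ne_zero_iff.mpr hx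
      have hmem : (‖x‖⁻¹ • x) ∈ Metric.sphere (0 : Fin m → ℝ) 1 := by
        simp [norm_smul, abs_of_nonneg (norm_nonneg x), inv_mul_cancel₀ hxn]
      have h0 : ν x₀ ≤ ν (‖x‖⁻¹ • x) := hmin hmem
      have hs : ν (‖x‖⁻¹ • x) = ‖x‖⁻¹ * ν x := by
        rw [hν.2.2.1]; congr 1; exact abs_of_nonneg (by positivity)
      rw [hs] at h0
      have h2 := norm_nonneg x
      have h3 : ‖x‖⁻¹ * ν x * ‖x‖ = ν x := by field_simp
      linarith [mul_le_mul_of_nonneg_right h0 h2, h3]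

end aux

theorem stmt15 {m : ℕ} (ν : (Fin m → ℝ) → ℝ) (hν : IsNorm ν) :
    ∃ C₂ : ℝ, 0 < C₂ ∧
      ∀ Q : Matrix (Fin m) (Fin m) ℝ,
        (∀ j : Fin m, ν (fun i => Q i j) = 1) →
        (∀ j : Fin m,
          sInf {r : ℝ | ∃ w ∈ Submodule.span ℝ {v : Fin m → ℝ | ∃ i, i < j ∧ v = fun r' => Q r' i},
            r = ν ((fun i => Q i j) - w)} = 1) →
        ∀ x : Fin m → ℝ, ν x = 1 → C₂ ≤ ν (Q.mulVec x) := by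
  classical
  obtain ⟨c, hc, hlow⟩ := nu_lower hν
  have hcont := nu_continuous hν
  set S : Set (Fin m → Fin m → ℝ) :=
    {A | (∀ j, ν (fun i => A i j) = 1) ∧
      ∀ j : Fin m, ∀ cv : Fin m → ℝ,
        1 ≤ ν ((fun i => A i j) -
          ∑ i ∈ Finset.univ.filter (fun i => i < j), cv i • (fun r => A r i))} with hSdef
  set X : Set (Fin m → ℝ) := {x | ν x = 1} with hXdef
  set f : (Fin m → Fin m → ℝ) × (Fin m → ℝ) → ℝ :=
    fun p => ν (fun i => ∑ j, p.1 i j * p.2 j) with hfdef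
  -- membership of hypothesis-satisfying Q in S
  have hQS : ∀ Q : Matrix (Fin m) (Fin m) ℝ,
      (∀ j : Fin m, ν (fun i => Q i j) = 1) →
      (∀ j : Fin m,
        sInf {r : ℝ | ∃ w ∈ Submodule.span ℝ {v : Fin m → ℝ | ∃ i, i < j ∧ v = fun r' => Q r' i},
          r = ν ((fun i => Q i j) - w)} = 1) →
      (fun i j => Q i j) ∈ S := by
    intro Q h1 h2
    refine ⟨fun j => h1 j, fun j cv => ?_⟩
    set w : Fin m → ℝ := ∑ i ∈ Finset.univ.filter (fun i => i < j), cv i • (fun r => Q r i)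
      with hw
    have hwmem : w ∈ Submodule.span ℝ
        {v : Fin m → ℝ | ∃ i, i < j ∧ v = fun r' => Q r' i} := by
      refine Submodule.sum_mem _ fun i hi => Submodule.smul_mem _ _ (Submodule.subset_span ?_)
      exact ⟨i, (Finset.mem_filter.mp hi).2, rfl⟩
    have hbdd : BddBelow {r : ℝ | ∃ w ∈ Submodule.span ℝ
        {v : Fin m → ℝ | ∃ i, i < j ∧ v = fun r' => Q r' i},
        r = ν ((fun i => Q i j) - w)} := by
      refine ⟨0, fun r hr => ?_⟩
      obtain ⟨w', _, rfl⟩ := hr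
      exact hν.1 _
    have hmem : ν ((fun i => Q i j) - w) ∈ {r : ℝ | ∃ w ∈ Submodule.span ℝ
        {v : Fin m → ℝ | ∃ i, i < j ∧ v = fun r' => Q r' i},
        r = ν ((fun i => Q i j) - w)} := ⟨w, hwmem, rfl⟩
    have := csInf_le hbdd hmem
    rw [h2 j] at this
    exact this
  -- S is closed
  have hS_closed : IsClosed S := by
    rw [hSdef]
    have : {A : Fin m → Fin m → ℝ | (∀ j, ν (fun i => A i j) = 1) ∧
        ∀ j : Fin m, ∀ cv : Fin m → ℝ,
        1 ≤ ν ((fun i => A i j) -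
          ∑ i ∈ Finset.univ.filter (fun i => i < j), cv i • (fun r => A r i))} =
        (⋂ j : Fin m, {A | ν (fun i => A i j) = 1}) ∩
        (⋂ j : Fin m, ⋂ cv : Fin m → ℝ, {A : Fin m → Fin m → ℝ | 1 ≤ ν ((fun i => A i j) -
          ∑ i ∈ Finset.univ.filter (fun i => i < j), cv i • (fun r => A r i : Fin m → ℝ))}) := by
      ext A
      simp only [Set.mem_setOf_eq, Set.mem_inter_iff, Set.mem_iInter]
    rw [this]
    refine IsClosed.inter (isClosed_iInter fun j => ?_)
      (isClosed_iInter fun j => isClosed_iInter fun cv => ?_)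
    · exact isClosed_eq (hcont.comp (by fun_prop)) continuous_const
    · exact isClosed_le continuous_const (hcont.comp (by fun_prop))
  -- X is closed
  have hX_closed : IsClosed X := isClosed_eq hcont continuous_const
  -- boundedness
  have hbound : ∀ y : Fin m → ℝ, ν y = 1 → ‖y‖ ≤ 1 / c := by
    intro y hy
    have := hlow y
    rw [hy] at this
    rw [le_div_iff₀ hc]
    linarith
  have hS_sub : S ⊆ Metric.closedBall 0 (1 / c) := by
    intro A hA
    rw [Metric.mem_closedBall, dist_zero_right]
    rw [pi_norm_le_iff_of_nonneg (by positivity)]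
    intro i
    rw [pi_norm_le_iff_of_nonneg (by positivity)]
    intro j
    have hcol := hbound _ (hA.1 j)
    calc ‖A i j‖ = ‖(fun r => A r j) i‖ := rfl
      _ ≤ ‖(fun r => A r j)‖ := norm_le_pi_norm (fun r => A r j) i
      _ ≤ 1 / c := hcol
  have hX_sub : X ⊆ Metric.closedBall 0 (1 / c) := by
    intro y hy
    rw [Metric.mem_closedBall, dist_zero_right]
    exact hbound y hy
  have hS_cpt : IsCompact S :=
    (isCompact_closedBall (0 : Fin m → Fin m → ℝ) (1 / c)).of_isClosed_subset hS_closed hS_sub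
  have hX_cpt : IsCompact X :=
    (isCompact_closedBall (0 : Fin m → ℝ) (1 / c)).of_isClosed_subset hX_closed hX_sub
  have hK_cpt : IsCompact (S ×ˢ X) := hS_cpt.prod hX_cpt
  have hf_cont : Continuous f := hcont.comp (by fun_prop)
  -- positivity of f on S ×ˢ X
  have hpos : ∀ p ∈ S ×ˢ X, 0 < f p := by
    rintro ⟨A, x⟩ ⟨hA, hx⟩
    have hx0 : x ≠ 0 := by
      intro h
      rw [hXdef] at hx
      simp only [Set.mem_setOf_eq, h, nu_zero hν] at hx
      exact zero_ne_one hx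
    refine nu_pos hν ?_
    intro hzero
    -- (fun i => ∑ j, A i j * x j) = ∑ j, x j • col j
    have hrw : (fun i => ∑ j, A i j * x j) = ∑ j : Fin m, x j • (fun r => A r j) := by
      ext i
      simp [Finset.sum_apply, mul_comm]
    rw [hrw] at hzero
    obtain ⟨j', hj'⟩ : ∃ j, x j ≠ 0 := Function.ne_iff.mp hx0
    set s : Finset (Fin m) := Finset.univ.filter (fun j => x j ≠ 0) with hs
    have hs_ne : s.Nonempty := ⟨j', by simp [hs, hj']⟩
    set j₀ := s.max' hs_ne with hj₀
    have hxj₀ : x j₀ ≠ 0 := (Finset.mem_filter.mp (s.max'_mem hs_ne)).2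
    have hgt : ∀ i : Fin m, j₀ < i → x i = 0 := by
      intro i hi
      by_contra h
      have : i ∈ s := by simp [hs, h]
      exact absurd (s.le_max' i this) (not_le.mpr hi)
    -- split the sum
    have hsplit : ∑ j : Fin m, x j • (fun r => A r j) =
        x j₀ • (fun r => A r j₀) +
          ∑ i ∈ Finset.univ.filter (fun i => i < j₀), x i • (fun r => A r i) := by
      have h1 : ∑ j : Fin m, x j • (fun r => A r j) =
          ∑ j ∈ Finset.univ.filter (fun i => i ≤ j₀), x j • (fun r => A r j) := by
        refine (Finset.sum_subset (Finset.filter_subset _ _) ?_).symm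
        intro i _ hi
        have : j₀ < i := by
          simp only [Finset.mem_filter, Finset.mem_univ, true_and] at hi
          exact lt_of_not_ge hi
        rw [hgt i this, zero_smul]
      have h2 : Finset.univ.filter (fun i => i ≤ j₀) =
          insert j₀ (Finset.univ.filter (fun i => i < j₀)) := by
        ext i
        simp only [Finset.mem_filter, Finset.mem_univ, true_and, Finset.mem_insert]
        rw [le_iff_lt_or_eq, or_comm]
      rw [h1, h2, Finset.sum_insert (by simp)]
    rw [hsplit] at hzero
    -- derive the contradiction with A ∈ S
    set T : Fin m → ℝ := ∑ i ∈ Finset.univ.filter (fun i => i < j₀), x i • (fun r => A r i)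
      with hT
    set cv : Fin m → ℝ := fun i => -(x i / x j₀) with hcv
    have hcomb : (fun i => A i j₀) -
        ∑ i ∈ Finset.univ.filter (fun i => i < j₀), cv i • (fun r => A r i) = 0 := by
      have hsum : ∑ i ∈ Finset.univ.filter (fun i => i < j₀), cv i • (fun r => A r i) =
          (-(x j₀)⁻¹) • T := by
        rw [hT, Finset.smul_sum]
        refine Finset.sum_congr rfl fun i _ => ?_
        rw [smul_smul, hcv]
        congr 1
        field_simp
      rw [hsum]
      have hTeq : T = -(x j₀ • fun r => A r j₀) := by
        have := hzero
        rw [hT]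
        -- x j₀ • col + T = 0
        have : x j₀ • (fun r => A r j₀) + T = 0 := hzero
        linear_combination (norm := module) this
      rw [hTeq]
      rw [smul_neg, neg_smul, neg_neg, smul_smul, inv_mul_cancel₀ hxj₀, one_smul]
      abel
    have := hA.2 j₀ cv
    rw [hcomb, nu_zero hν] at this
    linarith
  -- split on nonemptiness
  by_cases hK : (S ×ˢ X).Nonempty
  · obtain ⟨p₀, hp₀, hminf⟩ := hK_cpt.exists_isMinOn hK hf_cont.continuousOn
    refine ⟨f p₀, hpos p₀ hp₀, ?_⟩
    intro Q h1 h2 x hx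
    have hmem : ((fun i j => Q i j : Fin m → Fin m → ℝ), x) ∈ S ×ˢ X :=
      ⟨hQS Q h1 h2, hx⟩
    have := hminf hmem
    have heq : f ((fun i j => Q i j : Fin m → Fin m → ℝ), x) = ν (Q.mulVec x) := by
      rw [hfdef]
      congr 1
    exact heq ▸ this
  · refine ⟨1, one_pos, fun Q h1 h2 x hx => ?_⟩
    exact absurd ⟨((fun i j => Q i j : Fin m → Fin m → ℝ), x), hQS Q h1 h2, hx⟩ hK
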